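/- Let N ≥ 1 and let P be the irreducible birth-and-death stochastic matrix on I = {0,1,…,N} with parameters p_x = P(x,x+1), q_x = P(x,x−1), r_x = P(x,x), where p_x + q_x + r_x = 1, q_0 = 0 = p_N, p_x > 0 for all x < N, q_x > 0 for all x ≥ 1, and P(x,y) = 0 when |x−y| > 1. Assume P is monotone: p_x + q_{x+1} ≤ 1 for all x < N. Let π be the stationary distribution of P and π^c(x) = Σ_{y≤x} π(y). Then: (a) the Siegmund dual P̂ (defined by H_S·P̂ᵀ = P·H_S with H_S(x,y) = 1 if x ≤ y, 0 otherwise) is the birth-and-death kernel with P̂(x,x−1) = p_x, P̂(x,x) = 1 − p_x − q_{x+1}, P̂(x,x+1) = q_{x+1} (with the convention q_{N+1} = 0), and all other entries 0; its row sums equal 1 except at x = 0 where the row sum is 1 − p_0 < 1, and N is an absorbing state of P̂; (b) the matrix P̃ defined by P̃(x,x−1) = p_x·π^c(x−1)/π^c(x), P̃(x,x) = 1 − (p_x + q_{x+1}), P̃(x,x+1) = q_{x+1}·π^c(x+1)/π^c(x), and all other entries 0, is stochastic and satisfies P̃·Λ = Λ·P, where Λ(x,y) = π(y)/π^c(x)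 if y ≤ x and 0 otherwise. -/

import Mathlib

open Matrix Finset

lemma sum_eq_one' {n : ℕ} (f : Fin n → ℝ) (a : Fin n)
    (h0 : ∀ z, z ≠ a → f z = 0) : ∑ z, f z = f a :=
  Finset.sum_eq_single_of_mem a (Finset.mem_univ a) (fun z _ hz => h0 z hz)

lemma sum_eq_two' {n : ℕ} (f : Fin n → ℝ) (a b : Fin n) (hab : a ≠ b)
    (h0 : ∀ z, z ≠ a → z ≠ b → f z = 0) : ∑ z, f z = f a + f b := by
  classical
  have hsub : ∑ z ∈ ({a, b} : Finset (Fin n)), f z = ∑ z, f z := by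
    apply Finset.sum_subset (Finset.subset_univ _)
    intro z _ hz
    simp only [Finset.mem_insert, Finset.mem_singleton, not_or] at hz
    exact h0 z hz.1 hz.2
  rw [← hsub, Finset.sum_pair hab]

lemma sum_eq_three' {n : ℕ} (f : Fin n → ℝ) (a b c : Fin n)
    (hab : a ≠ b) (hac : a ≠ c) (hbc : b ≠ c)
    (h0 : ∀ z, z ≠ a → z ≠ b → z ≠ c → f z = 0) :
    ∑ z, f z = f a + f b + f c := by
  classical
  have hsub : ∑ z ∈ ({a, b, c} : Finset (Fin n)), f z = ∑ z, f z := by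
    apply Finset.sum_subset (Finset.subset_univ _)
    intro z _ hz
    simp only [Finset.mem_insert, Finset.mem_singleton, not_or] at hz
    exact h0 z hz.1 hz.2.1 hz.2.2
  rw [← hsub, Finset.sum_insert (by simp [hab, hac]), Finset.sum_pair hbc]
  ring

lemma fin_sub_one_val {n : ℕ} (x : Fin (n+1)) (hx : 0 < (x:ℕ)) :
    ((x - 1 : Fin (n+1)) : ℕ) = (x:ℕ) - 1 := by
  rw [Fin.coe_sub_one, if_neg]
  intro h; rw [h] at hx; simp at hx

lemma fin_add_one_val {n : ℕ} (x : Fin (n+1)) (hx : (x:ℕ) < n) :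
    ((x + 1 : Fin (n+1)) : ℕ) = (x:ℕ) + 1 := by
  rw [Fin.val_add_one, if_neg]
  intro h; rw [h] at hx; simp at hx

lemma fin_sub_add {n : ℕ} (x : Fin (n+1)) (hx : 0 < (x:ℕ)) : (x - 1 : Fin (n+1)) + 1 = x := by
  apply Fin.ext
  rw [fin_add_one_val _ (by rw [fin_sub_one_val x hx]; omega : ((x-1:Fin (n+1)):ℕ) < n),
    fin_sub_one_val x hx]
  omega

lemma fin_add_sub {n : ℕ} (x : Fin (n+1)) (hx : (x:ℕ) < n) : (x + 1 : Fin (n+1)) - 1 = x := by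
  apply Fin.ext
  rw [fin_sub_one_val _ (by rw [fin_add_one_val x hx]; omega : 0 < ((x+1:Fin (n+1)):ℕ)),
    fin_add_one_val x hx]
  omega

section BD
variable {N : ℕ} {P : Matrix (Fin (N+1)) (Fin (N+1)) ℝ} {p q r π : Fin (N+1) → ℝ}

lemma Pform
    (htri : ∀ x y : Fin (N+1), ((x : ℕ) + 1 < (y : ℕ) ∨ (y : ℕ) + 1 < (x : ℕ)) → P x y = 0)
    (hup : ∀ x : Fin (N+1), (x : ℕ) < N → P x (x + 1) = p x)
    (hdown : ∀ x : Fin (N+1), 0 < (x : ℕ) → P x (x - 1) = q x)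
    (hdiag : ∀ x, P x x = r x) (x z : Fin (N+1)) :
    P x z = if (z:ℕ)+1 = (x:ℕ) then q x
      else if z = x then r x
      else if (z:ℕ) = (x:ℕ)+1 then p x else 0 := by
  by_cases h1 : (z:ℕ)+1 = (x:ℕ)
  · have hx : 0 < (x:ℕ) := by omega
    have hz : z = x - 1 := by
      apply Fin.ext; rw [fin_sub_one_val x hx]; omega
    rw [if_pos h1, hz, hdown x hx]
  · rw [if_neg h1]
    by_cases h2 : z = x
    · rw [if_pos h2, h2, hdiag]
    · rw [if_neg h2]
      by_cases h3 : (z:ℕ) = (x:ℕ)+1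
      · have hxN : (x:ℕ) < N := by have := z.isLt; omega
        have hz : z = x + 1 := by
          apply Fin.ext; rw [fin_add_one_val x hxN]; exact h3
        rw [if_pos h3, hz, hup x hxN]
      · rw [if_neg h3]
        apply htri
        have : (z:ℕ) ≠ (x:ℕ) := fun h => h2 (Fin.ext h)
        omega

lemma stat3 (hN : 1 ≤ N)
    (htri : ∀ x y : Fin (N+1), ((x : ℕ) + 1 < (y : ℕ) ∨ (y : ℕ) + 1 < (x : ℕ)) → P x y = 0)
    (hup : ∀ x : Fin (N+1), (x : ℕ) < N → P x (x + 1) = p x)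
    (hdown : ∀ x : Fin (N+1), 0 < (x : ℕ) → P x (x - 1) = q x)
    (hdiag : ∀ x, P x x = r x)
    (hπP : ∀ y, ∑ x, π x * P x y = π y)
    (y : Fin (N+1)) :
    (if 0 < (y:ℕ) then π (y-1) * p (y-1) else 0) + π y * r y
      + (if (y:ℕ) < N then π (y+1) * q (y+1) else 0) = π y := by
  have key := hπP y
  by_cases h0 : 0 < (y:ℕ) <;> by_cases hyN : (y:ℕ) < N
  · have hv1 : ((y-1 : Fin (N+1)):ℕ) = (y:ℕ) - 1 := fin_sub_one_val y h0
    have hv2 : ((y+1 : Fin (N+1)):ℕ) = (y:ℕ) + 1 := fin_add_one_val y hyN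
    have eA : P (y-1) y = p (y-1) := by
      have := hup (y-1) (by rw [hv1]; omega)
      rwa [fin_sub_add y h0] at this
    have eB : P y y = r y := hdiag y
    have eC : P (y+1) y = q (y+1) := by
      have := hdown (y+1) (by rw [hv2]; omega)
      rwa [fin_add_sub y hyN] at this
    rw [sum_eq_three' (fun z => π z * P z y) (y-1) y (y+1)
      (by simp only [ne_eq, Fin.ext_iff, hv1]; omega)
      (by simp only [ne_eq, Fin.ext_iff, hv1, hv2]; omega)
      (by simp only [ne_eq, Fin.ext_iff, hv2]; omega)
      (by
        intro z hza hzb hzc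
        have hza' : (z:ℕ) ≠ (y:ℕ) - 1 := fun h => hza (Fin.ext (by rw [hv1, h]))
        have hzb' : (z:ℕ) ≠ (y:ℕ) := fun h => hzb (Fin.ext h)
        have hzc' : (z:ℕ) ≠ (y:ℕ) + 1 := fun h => hzc (Fin.ext (by rw [hv2, h]))
        have : P z y = 0 := htri z y (by omega)
        simp [this])] at key
    simp only [eA, eB, eC] at key
    rw [if_pos h0, if_pos hyN]
    linarith [key]
  · have hv1 : ((y-1 : Fin (N+1)):ℕ) = (y:ℕ) - 1 := fin_sub_one_val y h0
    have eA : P (y-1) y = p (y-1) := by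
      have := hup (y-1) (by rw [hv1]; have := y.isLt; omega)
      rwa [fin_sub_add y h0] at this
    have eB : P y y = r y := hdiag y
    rw [sum_eq_two' (fun z => π z * P z y) (y-1) y
      (by simp only [ne_eq, Fin.ext_iff, hv1]; omega)
      (by
        intro z hza hzb
        have hza' : (z:ℕ) ≠ (y:ℕ) - 1 := fun h => hza (Fin.ext (by rw [hv1, h]))
        have hzb' : (z:ℕ) ≠ (y:ℕ) := fun h => hzb (Fin.ext h)
        have : P z y = 0 := htri z y (by have := z.isLt; omega)
        simp [this])] at key
    simp only [eA, eB] at key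
    rw [if_pos h0, if_neg hyN]
    linarith [key]
  · have hv2 : ((y+1 : Fin (N+1)):ℕ) = (y:ℕ) + 1 := fin_add_one_val y hyN
    have eB : P y y = r y := hdiag y
    have eC : P (y+1) y = q (y+1) := by
      have := hdown (y+1) (by rw [hv2]; omega)
      rwa [fin_add_sub y hyN] at this
    rw [sum_eq_two' (fun z => π z * P z y) y (y+1)
      (by simp only [ne_eq, Fin.ext_iff, hv2]; omega)
      (by
        intro z hza hzb
        have hza' : (z:ℕ) ≠ (y:ℕ) := fun h => hza (Fin.ext h)
        have hzb' : (z:ℕ) ≠ (y:ℕ) + 1 := fun h => hzb (Fin.ext (by rw [hv2, h]))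
        have : P z y = 0 := htri z y (by omega)
        simp [this])] at key
    simp only [eB, eC] at key
    rw [if_neg h0, if_pos hyN]
    linarith [key]
  · omega

lemma detbal (hN : 1 ≤ N)
    (htri : ∀ x y : Fin (N+1), ((x : ℕ) + 1 < (y : ℕ) ∨ (y : ℕ) + 1 < (x : ℕ)) → P x y = 0)
    (hup : ∀ x : Fin (N+1), (x : ℕ) < N → P x (x + 1) = p x)
    (hdown : ∀ x : Fin (N+1), 0 < (x : ℕ) → P x (x - 1) = q x)
    (hdiag : ∀ x, P x x = r x)
    (hsum : ∀ x, p x + q x + r x = 1)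
    (hq0 : q 0 = 0)
    (hπP : ∀ y, ∑ x, π x * P x y = π y) :
    ∀ x : Fin (N+1), (x:ℕ) < N → π x * p x = π (x+1) * q (x+1) := by
  suffices h : ∀ k : ℕ, ∀ x : Fin (N+1), (x:ℕ) = k → (x:ℕ) < N → π x * p x = π (x+1) * q (x+1) by
    intro x hx; exact h (x:ℕ) x rfl hx
  intro k
  induction k with
  | zero =>
    intro x hx hxN
    have hst := stat3 hN htri hup hdown hdiag hπP x
    rw [if_neg (by omega : ¬ 0 < (x:ℕ)), if_pos hxN] at hst
    have hx0 : x = 0 := Fin.ext (by simpa using hx)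
    have hqx : q x = 0 := by rw [hx0]; exact hq0
    have hrx : r x = 1 - p x := by have := hsum x; rw [hqx] at this; linarith
    have hpr : π x * r x = π x - π x * p x := by rw [hrx]; ring
    linarith [hst, hpr]
  | succ n ih =>
    intro x hx hxN
    have h0 : 0 < (x:ℕ) := by omega
    have hst := stat3 hN htri hup hdown hdiag hπP x
    rw [if_pos h0, if_pos hxN] at hst
    have hprev : π (x-1) * p (x-1) = π x * q x := by
      have hv1 : ((x-1 : Fin (N+1)):ℕ) = (x:ℕ) - 1 := fin_sub_one_val x h0
      have hvN : ((x-1 : Fin (N+1)):ℕ) < N := by omega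
      have := ih (x-1) (by omega) hvN
      rwa [fin_sub_add x h0] at this
    have hrx : r x = 1 - p x - q x := by have := hsum x; linarith
    have hpr : π x * r x = π x - π x * p x - π x * q x := by rw [hrx]; ring
    linarith [hst, hpr, hprev]
end BD

set_option maxHeartbeats 2000000

/-- Corollary coro31: for a monotone irreducible birth-and-death stochastic kernel `P`
with parameters `p, q, r` and stationary distribution `π`:
(a) the Siegmund dual `P̂` is the displayed birth-and-death kernel, its row sums are `1`
except at `0` where the row sum is `1 − p₀ < 1`, and `N` is absorbing for `P̂`;
(b) the displayed `P̃` is stochastic and `P̃·Λ = Λ·P`. -/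
theorem stmt11 (N : ℕ) (hN : 1 ≤ N) (P : Matrix (Fin (N+1)) (Fin (N+1)) ℝ)
    (p q r : Fin (N+1) → ℝ) (π : Fin (N+1) → ℝ)
    (hP0 : ∀ x y, 0 ≤ P x y) (hP1 : ∀ x, ∑ y, P x y = 1)
    (htri : ∀ x y : Fin (N+1), ((x : ℕ) + 1 < (y : ℕ) ∨ (y : ℕ) + 1 < (x : ℕ)) → P x y = 0)
    (hup : ∀ x : Fin (N+1), (x : ℕ) < N → P x (x + 1) = p x)
    (hdown : ∀ x : Fin (N+1), 0 < (x : ℕ) → P x (x - 1) = q x)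
    (hdiag : ∀ x, P x x = r x)
    (hsum : ∀ x, p x + q x + r x = 1)
    (hq0 : q 0 = 0) (hpN : p (Fin.last N) = 0)
    (hppos : ∀ x : Fin (N+1), (x : ℕ) < N → 0 < p x)
    (hqpos : ∀ x : Fin (N+1), 0 < (x : ℕ) → 0 < q x)
    (hmono : ∀ x : Fin (N+1), (x : ℕ) < N → p x + q (x + 1) ≤ 1)
    (hπpos : ∀ x, 0 < π x) (hπ1 : ∑ x, π x = 1)
    (hπP : ∀ y, ∑ x, π x * P x y = π y) :
    let qq : Fin (N+1) → ℝ := fun x => if (x : ℕ) < N then q (x + 1) else 0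
    let HS : Matrix (Fin (N+1)) (Fin (N+1)) ℝ :=
      Matrix.of fun x y => if x ≤ y then 1 else 0
    let Phat : Matrix (Fin (N+1)) (Fin (N+1)) ℝ :=
      Matrix.of fun x y =>
        if (y : ℕ) + 1 = (x : ℕ) then p x
        else if y = x then 1 - p x - qq x
        else if (y : ℕ) = (x : ℕ) + 1 then qq x
        else 0
    let πc : Fin (N+1) → ℝ := fun x => ∑ y ∈ Finset.Iic x, π y
    let Λ : Matrix (Fin (N+1)) (Fin (N+1)) ℝ :=
      Matrix.of fun x y => if y ≤ x then π y / πc x else 0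
    let Ptil : Matrix (Fin (N+1)) (Fin (N+1)) ℝ :=
      Matrix.of fun x y =>
        if (y : ℕ) + 1 = (x : ℕ) then p x * πc y / πc x
        else if y = x then 1 - (p x + qq x)
        else if (y : ℕ) = (x : ℕ) + 1 then qq x * πc y / πc x
        else 0
    (HS * Phatᵀ = P * HS ∧
      (∀ x : Fin (N+1), x ≠ 0 → ∑ y, Phat x y = 1) ∧
      (∑ y, Phat 0 y = 1 - p 0 ∧ 1 - p 0 < 1) ∧
      (∀ y, Phat (Fin.last N) y = if y = Fin.last N then 1 else 0)) ∧
    ((∀ x y, 0 ≤ Ptil x y) ∧ (∀ x, ∑ y, Ptil x y = 1) ∧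
      Ptil * Λ = Λ * P) := by
  intro qq HS Phat πc Λ Ptil
  have hdb : ∀ x : Fin (N+1), (x:ℕ) < N → π x * p x = π (x+1) * q (x+1) :=
    detbal hN htri hup hdown hdiag hsum hq0 hπP
  have hπcpos : ∀ x, 0 < πc x := by
    intro x
    apply Finset.sum_pos (fun y _ => hπpos y) ⟨x, Finset.mem_Iic.mpr le_rfl⟩
  have hπcne : ∀ x, πc x ≠ 0 := fun x => ne_of_gt (hπcpos x)
  have hπcstep : ∀ x : Fin (N+1), (x:ℕ) < N → πc (x+1) = πc x + π (x+1) := by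
    intro x hx
    have hv2 : ((x+1 : Fin (N+1)):ℕ) = (x:ℕ) + 1 := fin_add_one_val x hx
    have hins : Finset.Iic (x+1) = insert (x+1) (Finset.Iic x) := by
      ext z
      simp only [Finset.mem_Iic, Finset.mem_insert, Fin.le_def, Fin.ext_iff, hv2]
      omega
    show ∑ y ∈ Finset.Iic (x+1), π y = ∑ y ∈ Finset.Iic x, π y + π (x+1)
    rw [hins, Finset.sum_insert (by simp [Finset.mem_Iic, Fin.le_def, hv2])]
    ring
  have hπcsub : ∀ x : Fin (N+1), 0 < (x:ℕ) → πc x = πc (x-1) + π x := by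
    intro x hx
    have hv1 : ((x-1 : Fin (N+1)):ℕ) = (x:ℕ) - 1 := fin_sub_one_val x hx
    have := hπcstep (x-1) (by rw [hv1]; have := x.isLt; omega)
    rwa [fin_sub_add x hx] at this
  have hπc0 : πc 0 = π 0 := by
    show ∑ y ∈ Finset.Iic (0 : Fin (N+1)), π y = π 0
    have : Finset.Iic (0 : Fin (N+1)) = {0} := by
      ext z; simp only [Finset.mem_Iic, Finset.mem_singleton, Fin.le_zero_iff]
    rw [this, Finset.sum_singleton]
  have hp_nonneg : ∀ x, 0 ≤ p x := by
    intro x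
    by_cases hx : (x:ℕ) < N
    · exact le_of_lt (hppos x hx)
    · have : x = Fin.last N := Fin.ext (by simp only [Fin.val_last]; have := x.isLt; omega)
      rw [this, hpN]
  have hqq_nonneg : ∀ x, 0 ≤ qq x := by
    intro x
    simp only [qq]
    split_ifs with hx
    · exact le_of_lt (hqpos (x+1) (by rw [fin_add_one_val x hx]; omega))
    · exact le_refl 0
  have hqqN : ∀ x : Fin (N+1), ¬ (x:ℕ) < N → qq x = 0 := by
    intro x hx; simp only [qq, if_neg hx]
  have hqqlt : ∀ x : Fin (N+1), (x:ℕ) < N → qq x = q (x+1) := by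
    intro x hx; simp only [qq, if_pos hx]
  -- entry lemmas for Phat
  have hPhat_sub : ∀ y : Fin (N+1), 0 < (y:ℕ) → Phat y (y-1) = p y := by
    intro y hy
    have hv1 : ((y-1 : Fin (N+1)):ℕ) = (y:ℕ) - 1 := fin_sub_one_val y hy
    simp only [Phat, Matrix.of_apply]
    rw [if_pos (by rw [hv1]; omega)]
  have hPhat_diag : ∀ y, Phat y y = 1 - p y - qq y := by
    intro y
    have h1 : ¬((y:ℕ)+1 = (y:ℕ)) := by omega
    simp [Phat, Matrix.of_apply, h1]
  have hPhat_add : ∀ y : Fin (N+1), (y:ℕ) < N → Phat y (y+1) = qq y := by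
    intro y hy
    have hv2 : ((y+1 : Fin (N+1)):ℕ) = (y:ℕ) + 1 := fin_add_one_val y hy
    simp only [Phat, Matrix.of_apply]
    rw [if_neg (by rw [hv2]; omega), if_neg (by simp [Fin.ext_iff, hv2]; omega),
      if_pos (by rw [hv2])]
  have hPhat_zero : ∀ y z : Fin (N+1), (z:ℕ)+1 ≠ (y:ℕ) → (z:ℕ) ≠ (y:ℕ) →
      (z:ℕ) ≠ (y:ℕ)+1 → Phat y z = 0 := by
    intro y z h1 h2 h3
    simp only [Phat, Matrix.of_apply]
    rw [if_neg h1, if_neg (by simp [Fin.ext_iff]; omega), if_neg h3]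
  -- entry lemmas for Ptil
  have hPtil_sub : ∀ x : Fin (N+1), 0 < (x:ℕ) → Ptil x (x-1) = p x * πc (x-1) / πc x := by
    intro x hx
    have hv1 : ((x-1 : Fin (N+1)):ℕ) = (x:ℕ) - 1 := fin_sub_one_val x hx
    simp only [Ptil, Matrix.of_apply]
    rw [if_pos (by rw [hv1]; omega)]
  have hPtil_diag : ∀ x, Ptil x x = 1 - (p x + qq x) := by
    intro x
    have h1 : ¬((x:ℕ)+1 = (x:ℕ)) := by omega
    simp [Ptil, Matrix.of_apply, h1]
  have hPtil_add : ∀ x : Fin (N+1), (x:ℕ) < N → Ptil x (x+1) = qq x * πc (x+1) / πc x := by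
    intro x hx
    have hv2 : ((x+1 : Fin (N+1)):ℕ) = (x:ℕ) + 1 := fin_add_one_val x hx
    simp only [Ptil, Matrix.of_apply]
    rw [if_neg (by rw [hv2]; omega), if_neg (by simp [Fin.ext_iff, hv2]; omega),
      if_pos (by rw [hv2])]
  have hPtil_zero : ∀ x z : Fin (N+1), (z:ℕ)+1 ≠ (x:ℕ) → (z:ℕ) ≠ (x:ℕ) →
      (z:ℕ) ≠ (x:ℕ)+1 → Ptil x z = 0 := by
    intro x z h1 h2 h3
    simp only [Ptil, Matrix.of_apply]
    rw [if_neg h1, if_neg (by simp [Fin.ext_iff]; omega), if_neg h3]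
  have hHS : ∀ a b : Fin (N+1), HS a b = if (a:ℕ) ≤ (b:ℕ) then 1 else 0 := by
    intro a b; simp only [HS, Matrix.of_apply, Fin.le_def]
  have hΛ : ∀ a b : Fin (N+1), Λ a b = if (b:ℕ) ≤ (a:ℕ) then π b / πc a else 0 := by
    intro a b; simp only [Λ, Matrix.of_apply, Fin.le_def]
  -- main obligations
  have hC : ∀ x y : Fin (N+1), (∑ z, HS x z * Phat y z =
      (if (x:ℕ) < (y:ℕ) then (1:ℝ) else if (x:ℕ) = (y:ℕ) then 1 - p x
        else if (x:ℕ) = (y:ℕ)+1 then q x else 0)) := by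
    intro x y
    have hxlt := x.isLt
    have hylt := y.isLt
    by_cases h0 : 0 < (y:ℕ) <;> by_cases hyN : (y:ℕ) < N
    · have hv1 : ((y-1 : Fin (N+1)):ℕ) = (y:ℕ) - 1 := fin_sub_one_val y h0
      have hv2 : ((y+1 : Fin (N+1)):ℕ) = (y:ℕ) + 1 := fin_add_one_val y hyN
      rw [sum_eq_three' (fun z => HS x z * Phat y z) (y-1) y (y+1)
        (by simp only [ne_eq, Fin.ext_iff, hv1]; omega)
        (by simp only [ne_eq, Fin.ext_iff, hv1, hv2]; omega)
        (by simp only [ne_eq, Fin.ext_iff, hv2]; omega)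
        (by
          intro z hza hzb hzc
          have : Phat y z = 0 := hPhat_zero y z
            (fun h => hza (Fin.ext (by rw [hv1]; omega)))
            (fun h => hzb (Fin.ext h))
            (fun h => hzc (Fin.ext (by rw [hv2]; omega)))
          simp [this])]
      simp only [hHS, hPhat_sub y h0, hPhat_diag y, hPhat_add y hyN, hv1, hv2]
      by_cases hxy : (x:ℕ) < (y:ℕ)
      · rw [if_pos (by omega), if_pos (by omega), if_pos (by omega), if_pos hxy]; ring
      · by_cases hxy2 : (x:ℕ) = (y:ℕ)
        · rw [if_neg (by omega), if_pos (by omega), if_pos (by omega),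
            if_neg (by omega), if_pos hxy2, (Fin.ext hxy2 : x = y)]
          ring
        · by_cases hxy3 : (x:ℕ) = (y:ℕ)+1
          · rw [if_neg (by omega), if_neg (by omega), if_pos (by omega),
              if_neg (by omega), if_neg hxy2, if_pos hxy3,
              hqqlt y hyN, (Fin.ext (by rw [hv2]; omega) : (y+1:Fin (N+1)) = x)]
            ring
          · rw [if_neg (by omega), if_neg (by omega), if_neg (by omega),
              if_neg (by omega), if_neg hxy2, if_neg hxy3]
            ring
    · have hv1 : ((y-1 : Fin (N+1)):ℕ) = (y:ℕ) - 1 := fin_sub_one_val y h0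
      rw [sum_eq_two' (fun z => HS x z * Phat y z) (y-1) y
        (by simp only [ne_eq, Fin.ext_iff, hv1]; omega)
        (by
          intro z hza hzb
          have : Phat y z = 0 := hPhat_zero y z
            (fun h => hza (Fin.ext (by rw [hv1]; omega)))
            (fun h => hzb (Fin.ext h))
            (by have := z.isLt; omega)
          simp [this])]
      simp only [hHS, hPhat_sub y h0, hPhat_diag y, hv1, hqqN y hyN]
      by_cases hxy : (x:ℕ) < (y:ℕ)
      · rw [if_pos (by omega), if_pos (by omega), if_pos hxy]; ring
      · have hxy2 : (x:ℕ) = (y:ℕ) := by omega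
        rw [if_neg (by omega), if_pos (by omega), if_neg (by omega),
          if_pos hxy2, (Fin.ext hxy2 : x = y)]
        ring
    · have hv2 : ((y+1 : Fin (N+1)):ℕ) = (y:ℕ) + 1 := fin_add_one_val y hyN
      rw [sum_eq_two' (fun z => HS x z * Phat y z) y (y+1)
        (by simp only [ne_eq, Fin.ext_iff, hv2]; omega)
        (by
          intro z hza hzb
          have : Phat y z = 0 := hPhat_zero y z
            (by omega)
            (fun h => hza (Fin.ext h))
            (fun h => hzb (Fin.ext (by rw [hv2]; omega)))
          simp [this])]
      simp only [hHS, hPhat_diag y, hPhat_add y hyN, hv2]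
      by_cases hxy2 : (x:ℕ) = (y:ℕ)
      · rw [if_pos (by omega), if_pos (by omega), if_neg (by omega),
          if_pos hxy2, (Fin.ext hxy2 : x = y)]
        ring
      · by_cases hxy3 : (x:ℕ) = (y:ℕ)+1
        · rw [if_neg (by omega), if_pos (by omega), if_neg (by omega),
            if_neg hxy2, if_pos hxy3, hqqlt y hyN,
            (Fin.ext (by rw [hv2]; omega) : (y+1:Fin (N+1)) = x)]
          ring
        · rw [if_neg (by omega), if_neg (by omega), if_neg (by omega),
            if_neg hxy2, if_neg hxy3]
          ring
    · omega
  have hC' : ∀ x y : Fin (N+1), (∑ z, P x z * HS z y =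
      (if (x:ℕ) < (y:ℕ) then (1:ℝ) else if (x:ℕ) = (y:ℕ) then 1 - p x
        else if (x:ℕ) = (y:ℕ)+1 then q x else 0)) := by
    intro x y
    have hxlt := x.isLt
    have hylt := y.isLt
    by_cases h0 : 0 < (x:ℕ) <;> by_cases hxN : (x:ℕ) < N
    · have hv1 : ((x-1 : Fin (N+1)):ℕ) = (x:ℕ) - 1 := fin_sub_one_val x h0
      have hv2 : ((x+1 : Fin (N+1)):ℕ) = (x:ℕ) + 1 := fin_add_one_val x hxN
      rw [sum_eq_three' (fun z => P x z * HS z y) (x-1) x (x+1)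
        (by simp only [ne_eq, Fin.ext_iff, hv1]; omega)
        (by simp only [ne_eq, Fin.ext_iff, hv1, hv2]; omega)
        (by simp only [ne_eq, Fin.ext_iff, hv2]; omega)
        (by
          intro z hza hzb hzc
          have hza' : (z:ℕ) ≠ (x:ℕ) - 1 := fun h => hza (Fin.ext (by rw [hv1, h]))
          have hzb' : (z:ℕ) ≠ (x:ℕ) := fun h => hzb (Fin.ext h)
          have hzc' : (z:ℕ) ≠ (x:ℕ) + 1 := fun h => hzc (Fin.ext (by rw [hv2, h]))
          have : P x z = 0 := htri x z (by omega)
          simp [this])]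
      simp only [hHS, hdown x h0, hdiag x, hup x hxN, hv1, hv2]
      by_cases hxy : (x:ℕ) < (y:ℕ)
      · rw [if_pos (by omega), if_pos (by omega), if_pos (by omega), if_pos hxy]
        linarith [hsum x]
      · by_cases hxy2 : (x:ℕ) = (y:ℕ)
        · rw [if_pos (by omega), if_pos (by omega), if_neg (by omega),
            if_neg (by omega), if_pos hxy2]
          linarith [hsum x]
        · by_cases hxy3 : (x:ℕ) = (y:ℕ)+1
          · rw [if_pos (by omega), if_neg (by omega), if_neg (by omega),
              if_neg (by omega), if_neg hxy2, if_pos hxy3]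
            ring
          · rw [if_neg (by omega), if_neg (by omega), if_neg (by omega),
              if_neg (by omega), if_neg hxy2, if_neg hxy3]
            ring
    · have hv1 : ((x-1 : Fin (N+1)):ℕ) = (x:ℕ) - 1 := fin_sub_one_val x h0
      rw [sum_eq_two' (fun z => P x z * HS z y) (x-1) x
        (by simp only [ne_eq, Fin.ext_iff, hv1]; omega)
        (by
          intro z hza hzb
          have hza' : (z:ℕ) ≠ (x:ℕ) - 1 := fun h => hza (Fin.ext (by rw [hv1, h]))
          have hzb' : (z:ℕ) ≠ (x:ℕ) := fun h => hzb (Fin.ext h)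
          have : P x z = 0 := htri x z (by have := z.isLt; omega)
          simp [this])]
      simp only [hHS, hdown x h0, hdiag x, hv1]
      have hpx : p x = 0 := by
        have : x = Fin.last N := Fin.ext (by simp only [Fin.val_last]; omega)
        rw [this, hpN]
      by_cases hxy2 : (x:ℕ) = (y:ℕ)
      · rw [if_pos (by omega), if_pos (by omega), if_neg (by omega),
          if_pos hxy2]
        linarith [hsum x]
      · by_cases hxy3 : (x:ℕ) = (y:ℕ)+1
        · rw [if_pos (by omega), if_neg (by omega), if_neg (by omega),
            if_neg hxy2, if_pos hxy3]
          ring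
        · rw [if_neg (by omega), if_neg (by omega), if_neg (by omega),
            if_neg hxy2, if_neg hxy3]
          ring
    · have hv2 : ((x+1 : Fin (N+1)):ℕ) = (x:ℕ) + 1 := fin_add_one_val x hxN
      rw [sum_eq_two' (fun z => P x z * HS z y) x (x+1)
        (by simp only [ne_eq, Fin.ext_iff, hv2]; omega)
        (by
          intro z hza hzb
          have hza' : (z:ℕ) ≠ (x:ℕ) := fun h => hza (Fin.ext h)
          have hzb' : (z:ℕ) ≠ (x:ℕ) + 1 := fun h => hzb (Fin.ext (by rw [hv2, h]))
          have : P x z = 0 := htri x z (by omega)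
          simp [this])]
      simp only [hHS, hdiag x, hup x hxN, hv2]
      have hqx : q x = 0 := by
        have : x = 0 := Fin.ext (by simp only [Fin.val_zero]; omega)
        rw [this, hq0]
      by_cases hxy : (x:ℕ) < (y:ℕ)
      · rw [if_pos (by omega), if_pos (by omega), if_pos hxy]
        linarith [hsum x]
      · have hxy2 : (x:ℕ) = (y:ℕ) := by omega
        rw [if_pos (by omega), if_neg (by omega), if_neg (by omega),
          if_pos hxy2]
        linarith [hsum x]
    · omega
  have hA1 : HS * Phatᵀ = P * HS := by
    ext x y
    rw [Matrix.mul_apply, Matrix.mul_apply]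
    simp only [Matrix.transpose_apply]
    rw [hC x y, hC' x y]
  have hA2 : ∀ x : Fin (N+1), x ≠ 0 → ∑ y, Phat x y = 1 := by
    intro x hx0
    have h0 : 0 < (x:ℕ) := by
      rcases Nat.eq_zero_or_pos (x:ℕ) with h | h
      · exact absurd (Fin.ext (by simp [h])) hx0
      · exact h
    by_cases hxN : (x:ℕ) < N
    · have hv1 : ((x-1 : Fin (N+1)):ℕ) = (x:ℕ) - 1 := fin_sub_one_val x h0
      have hv2 : ((x+1 : Fin (N+1)):ℕ) = (x:ℕ) + 1 := fin_add_one_val x hxN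
      rw [sum_eq_three' (fun z => Phat x z) (x-1) x (x+1)
        (by simp only [ne_eq, Fin.ext_iff, hv1]; omega)
        (by simp only [ne_eq, Fin.ext_iff, hv1, hv2]; omega)
        (by simp only [ne_eq, Fin.ext_iff, hv2]; omega)
        (by
          intro z hza hzb hzc
          exact hPhat_zero x z
            (fun h => hza (Fin.ext (by rw [hv1]; omega)))
            (fun h => hzb (Fin.ext h))
            (fun h => hzc (Fin.ext (by rw [hv2]; omega))))]
      simp only [hPhat_sub x h0, hPhat_diag x, hPhat_add x hxN]
      ring
    · have hv1 : ((x-1 : Fin (N+1)):ℕ) = (x:ℕ) - 1 := fin_sub_one_val x h0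
      rw [sum_eq_two' (fun z => Phat x z) (x-1) x
        (by simp only [ne_eq, Fin.ext_iff, hv1]; omega)
        (by
          intro z hza hzb
          exact hPhat_zero x z
            (fun h => hza (Fin.ext (by rw [hv1]; omega)))
            (fun h => hzb (Fin.ext h))
            (by have := z.isLt; omega))]
      simp only [hPhat_sub x h0, hPhat_diag x, hqqN x hxN]
      ring
  have hA3 : ∑ y, Phat 0 y = 1 - p 0 := by
    have h0N : ((0 : Fin (N+1)):ℕ) < N := by simp only [Fin.val_zero]; omega
    have hv2 : ((0+1 : Fin (N+1)):ℕ) = 1 := by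
      rw [fin_add_one_val _ h0N]; simp
    rw [sum_eq_two' (fun z => Phat 0 z) 0 (0+1)
      (by simp only [ne_eq, Fin.ext_iff, hv2, Fin.val_zero]; omega)
      (by
        intro z hza hzb
        exact hPhat_zero 0 z
          (by simp only [Fin.val_zero]; omega)
          (fun h => hza (Fin.ext (by simpa using h)))
          (fun h => hzb (Fin.ext (by rw [hv2]; simpa using h))))]
    simp only [hPhat_diag 0, hPhat_add 0 h0N]
    ring
  have hA3' : 1 - p 0 < 1 := by
    have := hppos 0 (by simp [hN]; omega)
    linarith
  have hA4 : ∀ y, Phat (Fin.last N) y = if y = Fin.last N then 1 else 0 := by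
    intro y
    by_cases hy : y = Fin.last N
    · rw [if_pos hy, hy, hPhat_diag, hqqN _ (by simp [Fin.val_last]),
        hpN]
      ring
    · rw [if_neg hy]
      have hyv : (y:ℕ) ≠ N := fun h => hy (Fin.ext (by simp [Fin.val_last, h]))
      by_cases h1 : (y:ℕ)+1 = N
      · have : y = Fin.last N - 1 := Fin.ext (by
          rw [fin_sub_one_val _ (by simp [Fin.val_last]; omega)]
          simp [Fin.val_last]; omega)
        rw [this, hPhat_sub _ (by simp [Fin.val_last]; omega), hpN]
      · exact hPhat_zero _ y (by simp [Fin.val_last]; omega)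
          (by simp [Fin.val_last]; omega)
          (by simp [Fin.val_last]; have := y.isLt; omega)
  have hB1 : ∀ x y, 0 ≤ Ptil x y := by
    intro x y
    by_cases h1 : (y:ℕ)+1 = (x:ℕ)
    · have hx0 : 0 < (x:ℕ) := by omega
      have hye : y = x - 1 := Fin.ext (by rw [fin_sub_one_val x hx0]; omega)
      rw [hye, hPtil_sub x hx0]
      exact div_nonneg (mul_nonneg (hp_nonneg x) (le_of_lt (hπcpos _)))
        (le_of_lt (hπcpos x))
    · by_cases h2 : (y:ℕ) = (x:ℕ)
      · rw [(Fin.ext h2 : y = x), hPtil_diag]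
        by_cases hxN : (x:ℕ) < N
        · rw [hqqlt x hxN]; linarith [hmono x hxN]
        · have hxe : x = Fin.last N := Fin.ext (by simp only [Fin.val_last]; have := x.isLt; omega)
          have hpx : p x = 0 := by rw [hxe]; exact hpN
          rw [hqqN x hxN, hpx]; norm_num
      · by_cases h3 : (y:ℕ) = (x:ℕ)+1
        · have hxN : (x:ℕ) < N := by have := y.isLt; omega
          have hye : y = x + 1 := Fin.ext (by rw [fin_add_one_val x hxN]; omega)
          rw [hye, hPtil_add x hxN]
          exact div_nonneg (mul_nonneg (hqq_nonneg x) (le_of_lt (hπcpos _)))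
            (le_of_lt (hπcpos x))
        · rw [hPtil_zero x y h1 h2 h3]
  have hB2 : ∀ x, ∑ y, Ptil x y = 1 := by
    intro x
    by_cases h0 : 0 < (x:ℕ) <;> by_cases hxN : (x:ℕ) < N
    · have hv1 : ((x-1 : Fin (N+1)):ℕ) = (x:ℕ) - 1 := fin_sub_one_val x h0
      have hv2 : ((x+1 : Fin (N+1)):ℕ) = (x:ℕ) + 1 := fin_add_one_val x hxN
      rw [sum_eq_three' (fun z => Ptil x z) (x-1) x (x+1)
        (by simp only [ne_eq, Fin.ext_iff, hv1]; omega)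
        (by simp only [ne_eq, Fin.ext_iff, hv1, hv2]; omega)
        (by simp only [ne_eq, Fin.ext_iff, hv2]; omega)
        (by
          intro z hza hzb hzc
          exact hPtil_zero x z
            (fun h => hza (Fin.ext (by rw [hv1]; omega)))
            (fun h => hzb (Fin.ext h))
            (fun h => hzc (Fin.ext (by rw [hv2]; omega))))]
      simp only [hPtil_sub x h0, hPtil_diag x, hPtil_add x hxN]
      have key : p x * πc (x-1) + (1 - (p x + qq x)) * πc x + qq x * πc (x+1) = πc x := by
        have e1 : πc (x-1) = πc x - π x := by linarith [hπcsub x h0]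
        rw [e1, hπcstep x hxN, hqqlt x hxN]
        linear_combination - hdb x hxN
      calc p x * πc (x-1) / πc x + (1 - (p x + qq x)) + qq x * πc (x+1) / πc x
          = (p x * πc (x-1) + (1 - (p x + qq x)) * πc x + qq x * πc (x+1)) / πc x := by
            rw [add_div, add_div, mul_div_cancel_right₀ _ (hπcne x)]
        _ = 1 := by rw [key, div_self (hπcne x)]
    · have hv1 : ((x-1 : Fin (N+1)):ℕ) = (x:ℕ) - 1 := fin_sub_one_val x h0
      rw [sum_eq_two' (fun z => Ptil x z) (x-1) x
        (by simp only [ne_eq, Fin.ext_iff, hv1]; omega)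
        (by
          intro z hza hzb
          exact hPtil_zero x z
            (fun h => hza (Fin.ext (by rw [hv1]; omega)))
            (fun h => hzb (Fin.ext h))
            (by have := z.isLt; omega))]
      simp only [hPtil_sub x h0, hPtil_diag x, hqqN x hxN]
      have hpx : p x = 0 := by
        have : x = Fin.last N := Fin.ext (by simp only [Fin.val_last]; have := x.isLt; omega)
        rw [this, hpN]
      rw [hpx]
      norm_num
    · have hx0 : x = 0 := Fin.ext (by simp only [Fin.val_zero]; omega)
      have hv2 : ((x+1 : Fin (N+1)):ℕ) = (x:ℕ) + 1 := fin_add_one_val x hxN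
      rw [sum_eq_two' (fun z => Ptil x z) x (x+1)
        (by simp only [ne_eq, Fin.ext_iff, hv2]; omega)
        (by
          intro z hza hzb
          exact hPtil_zero x z (by omega)
            (fun h => hza (Fin.ext h))
            (fun h => hzb (Fin.ext (by rw [hv2]; omega))))]
      simp only [hPtil_diag x, hPtil_add x hxN]
      have hπcx : πc x = π x := by rw [hx0, hπc0]
      have key : (1 - (p x + qq x)) * πc x + qq x * πc (x+1) = πc x := by
        rw [hπcstep x hxN, hqqlt x hxN]
        linear_combination - hdb x hxN - p x * hπcx
      calc (1 - (p x + qq x)) + qq x * πc (x+1) / πc x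
          = ((1 - (p x + qq x)) * πc x + qq x * πc (x+1)) / πc x := by
            rw [add_div, mul_div_cancel_right₀ _ (hπcne x)]
        _ = 1 := by rw [key, div_self (hπcne x)]
    · omega
  have hD : ∀ x y : Fin (N+1), (∑ z, Ptil x z * Λ z y =
      (if (y:ℕ) < (x:ℕ) then π y / πc x else if (y:ℕ) = (x:ℕ) then π x * (1 - p x) / πc x
        else if (y:ℕ) = (x:ℕ)+1 then π x * p x / πc x else 0)) := by
    intro x y
    have hxlt := x.isLt
    have hylt := y.isLt
    by_cases h0 : 0 < (x:ℕ) <;> by_cases hxN : (x:ℕ) < N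
    · have hv1 : ((x-1 : Fin (N+1)):ℕ) = (x:ℕ) - 1 := fin_sub_one_val x h0
      have hv2 : ((x+1 : Fin (N+1)):ℕ) = (x:ℕ) + 1 := fin_add_one_val x hxN
      rw [sum_eq_three' (fun z => Ptil x z * Λ z y) (x-1) x (x+1)
        (by simp only [ne_eq, Fin.ext_iff, hv1]; omega)
        (by simp only [ne_eq, Fin.ext_iff, hv1, hv2]; omega)
        (by simp only [ne_eq, Fin.ext_iff, hv2]; omega)
        (by
          intro z hza hzb hzc
          have : Ptil x z = 0 := hPtil_zero x z
            (fun h => hza (Fin.ext (by rw [hv1]; omega)))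
            (fun h => hzb (Fin.ext h))
            (fun h => hzc (Fin.ext (by rw [hv2]; omega)))
          simp [this])]
      simp only [hPtil_sub x h0, hPtil_diag x, hPtil_add x hxN, hΛ, hv1, hv2]
      by_cases hxy : (y:ℕ) < (x:ℕ)
      · rw [if_pos (by omega), if_pos (by omega), if_pos (by omega), if_pos hxy]
        field_simp [hπcne x, hπcne (x-1), hπcne (x+1)]
        ring
      · by_cases hxy2 : (y:ℕ) = (x:ℕ)
        · rw [if_neg (by omega), if_pos (by omega), if_pos (by omega),
            if_neg (by omega), if_pos hxy2, (Fin.ext hxy2 : y = x)]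
          field_simp [hπcne x, hπcne (x-1), hπcne (x+1)]
          ring
        · by_cases hxy3 : (y:ℕ) = (x:ℕ)+1
          · rw [if_neg (by omega), if_neg (by omega), if_pos (by omega),
              if_neg (by omega), if_neg hxy2, if_pos hxy3,
              (Fin.ext (by rw [hv2]; omega) : y = x+1), hqqlt x hxN]
            field_simp [hπcne x, hπcne (x-1), hπcne (x+1)]
            linear_combination - hdb x hxN
          · rw [if_neg (by omega), if_neg (by omega), if_neg (by omega),
              if_neg (by omega), if_neg hxy2, if_neg hxy3]
            ring
    · have hv1 : ((x-1 : Fin (N+1)):ℕ) = (x:ℕ) - 1 := fin_sub_one_val x h0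
      rw [sum_eq_two' (fun z => Ptil x z * Λ z y) (x-1) x
        (by simp only [ne_eq, Fin.ext_iff, hv1]; omega)
        (by
          intro z hza hzb
          have : Ptil x z = 0 := hPtil_zero x z
            (fun h => hza (Fin.ext (by rw [hv1]; omega)))
            (fun h => hzb (Fin.ext h))
            (by have := z.isLt; omega)
          simp [this])]
      simp only [hPtil_sub x h0, hPtil_diag x, hΛ, hv1, hqqN x hxN]
      by_cases hxy : (y:ℕ) < (x:ℕ)
      · rw [if_pos (by omega), if_pos (by omega), if_pos hxy]
        field_simp [hπcne x, hπcne (x-1), hπcne (x+1)]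
        ring
      · by_cases hxy2 : (y:ℕ) = (x:ℕ)
        · rw [if_neg (by omega), if_pos (by omega), if_neg (by omega),
            if_pos hxy2, (Fin.ext hxy2 : y = x)]
          field_simp [hπcne x, hπcne (x-1), hπcne (x+1)]
          ring
        · rw [if_neg (by omega), if_neg (by omega), if_neg (by omega),
            if_neg hxy2, if_neg (by omega)]
          ring
    · have hv2 : ((x+1 : Fin (N+1)):ℕ) = (x:ℕ) + 1 := fin_add_one_val x hxN
      rw [sum_eq_two' (fun z => Ptil x z * Λ z y) x (x+1)
        (by simp only [ne_eq, Fin.ext_iff, hv2]; omega)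
        (by
          intro z hza hzb
          have : Ptil x z = 0 := hPtil_zero x z (by omega)
            (fun h => hza (Fin.ext h))
            (fun h => hzb (Fin.ext (by rw [hv2]; omega)))
          simp [this])]
      simp only [hPtil_diag x, hPtil_add x hxN, hΛ, hv2]
      by_cases hxy2 : (y:ℕ) = (x:ℕ)
      · rw [if_pos (by omega), if_pos (by omega), if_neg (by omega),
          if_pos hxy2, (Fin.ext hxy2 : y = x)]
        field_simp [hπcne x, hπcne (x-1), hπcne (x+1)]
        ring
      · by_cases hxy3 : (y:ℕ) = (x:ℕ)+1
        · rw [if_neg (by omega), if_pos (by omega), if_neg (by omega),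
            if_neg hxy2, if_pos hxy3,
            (Fin.ext (by rw [hv2]; omega) : y = x+1), hqqlt x hxN]
          field_simp [hπcne x, hπcne (x-1), hπcne (x+1)]
          linear_combination - hdb x hxN
        · rw [if_neg (by omega), if_neg (by omega), if_neg (by omega),
            if_neg hxy2, if_neg hxy3]
          ring
    · omega
  have hD' : ∀ x y : Fin (N+1), (∑ z, Λ x z * P z y =
      (if (y:ℕ) < (x:ℕ) then π y / πc x else if (y:ℕ) = (x:ℕ) then π x * (1 - p x) / πc x
        else if (y:ℕ) = (x:ℕ)+1 then π x * p x / πc x else 0)) := by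
    intro x y
    have hxlt := x.isLt
    have hylt := y.isLt
    by_cases hxy : (y:ℕ) < (x:ℕ)
    · rw [if_pos hxy]
      have he : ∀ z, Λ x z * P z y = π z * P z y / πc x := by
        intro z
        by_cases hz : (z:ℕ) ≤ (x:ℕ)
        · rw [hΛ, if_pos hz]; ring
        · have hP0' : P z y = 0 := htri z y (by omega)
          rw [hΛ, if_neg hz, hP0']; ring
      rw [Finset.sum_congr rfl (fun z _ => he z), ← Finset.sum_div, hπP y]
    · by_cases hxy2 : (y:ℕ) = (x:ℕ)
      · rw [if_neg hxy, if_pos hxy2, (Fin.ext hxy2 : y = x)]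
        by_cases hxN : (x:ℕ) < N
        · have hv2 := fin_add_one_val x hxN
          have hsplit : ∑ z, (π z * P z x / πc x - Λ x z * P z x)
              = π (x+1) * q (x+1) / πc x := by
            rw [sum_eq_one' _ (x+1)
              (by
                intro z hz
                by_cases hzx : (z:ℕ) ≤ (x:ℕ)
                · rw [hΛ, if_pos hzx]; ring
                · have hzz : (z:ℕ) ≠ (x:ℕ)+1 := fun h => hz (Fin.ext (by rw [hv2, h]))
                  have hP0' : P z x = 0 := htri z x (by omega)
                  rw [hΛ, if_neg hzx, hP0']; ring)]
            have hPx : P (x+1) x = q (x+1) := by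
              have := hdown (x+1) (by rw [hv2]; omega)
              rwa [fin_add_sub x hxN] at this
            rw [hPx, hΛ, if_neg (by rw [hv2]; omega)]
            ring
          rw [Finset.sum_sub_distrib, ← Finset.sum_div, hπP x, ← hdb x hxN] at hsplit
          have h2 : π x * (1 - p x) / πc x = π x / πc x - π x * p x / πc x := by
            rw [div_sub_div_same]; congr 1; ring
          rw [h2]
          linarith [hsplit]
        · have he : ∀ z, Λ x z * P z x = π z * P z x / πc x := by
            intro z
            rw [hΛ, if_pos (by have := z.isLt; omega)]; ring
          rw [Finset.sum_congr rfl (fun z _ => he z), ← Finset.sum_div, hπP x]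
          have hpx : p x = 0 := by
            have : x = Fin.last N := Fin.ext (by simp only [Fin.val_last]; omega)
            rw [this, hpN]
          rw [hpx]
          ring
      · by_cases hxy3 : (y:ℕ) = (x:ℕ)+1
        · rw [if_neg hxy, if_neg hxy2, if_pos hxy3]
          have hxN : (x:ℕ) < N := by omega
          have hv2 := fin_add_one_val x hxN
          have hye : y = x+1 := Fin.ext (by rw [hv2]; omega)
          rw [sum_eq_one' _ x
            (by
              intro z hz
              by_cases hzx : (z:ℕ) ≤ (x:ℕ)
              · have hzlt : (z:ℕ) < (x:ℕ) := by
                  rcases lt_or_eq_of_le hzx with h | h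
                  · exact h
                  · exact absurd (Fin.ext h) hz
                have hP0' : P z y = 0 := htri z y (by omega)
                rw [hP0']; ring
              · rw [hΛ, if_neg hzx]; ring)]
          rw [hye, hΛ, if_pos (by omega), hup x hxN]
          ring
        · rw [if_neg hxy, if_neg hxy2, if_neg hxy3]
          apply Finset.sum_eq_zero
          intro z _
          by_cases hzx : (z:ℕ) ≤ (x:ℕ)
          · have hP0' : P z y = 0 := htri z y (by omega)
            rw [hP0']; ring
          · rw [hΛ, if_neg hzx]; ring
  have hB3 : Ptil * Λ = Λ * P := by
    ext x y
    rw [Matrix.mul_apply, Matrix.mul_apply, hD x y, hD' x y]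
  exact ⟨⟨hA1, hA2, ⟨hA3, hA3'⟩, hA4⟩, hB1, hB2, hB3⟩
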